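/- arXiv:1505.06155 — 5 statements merged into one kernel-verified Lean document; each statement's English description precedes it below -/
import Mathlib

section
/- Let G and H be connected simple graphs of order n₁ ≥ 2 and n₂ ≥ 2 respectively. Then 3 ≤ dim_l(G ⊠ H) ≤ n₁·dim_l(H) + n₂·dim_l(G) − dim_l(G)·dim_l(H). -/
open SimpleGraph

/-- The strong product of two simple graphs. -/
def strongProd {α β : Type*} (G : SimpleGraph α) (H : SimpleGraph β) :
    SimpleGraph (α × β) where
  Adj x y := (x.1 = y.1 ∧ H.Adj x.2 y.2) ∨ (x.2 = y.2 ∧ G.Adj x.1 y.1) ∨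
      (G.Adj x.1 y.1 ∧ H.Adj x.2 y.2)
  symm := by
    constructor
    rintro x y (⟨h1, h2⟩ | ⟨h1, h2⟩ | ⟨h1, h2⟩)
    · exact Or.inl ⟨h1.symm, h2.symm⟩
    · exact Or.inr (Or.inl ⟨h1.symm, h2.symm⟩)
    · exact Or.inr (Or.inr ⟨h1.symm, h2.symm⟩)
  loopless := by
    constructor
    rintro x (⟨_, h⟩ | ⟨_, h⟩ | ⟨h, _⟩)
    · exact H.irrefl h
    · exact G.irrefl h
    · exact G.irrefl h

/-- A set `S` is a local metric generator for `G` if every pair of adjacent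
vertices is distinguished by some element of `S`. -/
def IsLocalMetricGenerator {α : Type*} (G : SimpleGraph α) (S : Set α) : Prop :=
  ∀ u v : α, G.Adj u v → ∃ s ∈ S, G.dist u s ≠ G.dist v s

/-- The local metric dimension of a graph. -/
noncomputable def localMetricDim {α : Type*} [Fintype α] (G : SimpleGraph α) : ℕ :=
  sInf {n | ∃ S : Finset α, S.card = n ∧ IsLocalMetricGenerator G ↑S}

/-- A set `S` is a metric generator for `G` if every pair of distinct
vertices is distinguished by some element of `S`. -/
def IsMetricGenerator {α : Type*} (G : SimpleGraph α) (S : Set α) : Prop :=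
  ∀ u v : α, u ≠ v → ∃ s ∈ S, G.dist u s ≠ G.dist v s

/-- The metric dimension of a graph. -/
noncomputable def metricDim {α : Type*} [Fintype α] (G : SimpleGraph α) : ℕ :=
  sInf {n | ∃ S : Finset α, S.card = n ∧ IsMetricGenerator G ↑S}

/-- The eccentricity of a vertex: the maximum distance to another vertex. -/
noncomputable def eccentricity {α : Type*} (G : SimpleGraph α) (v : α) : ℕ :=
  sSup {d | ∃ u, G.dist v u = d}

/-- The diameter of a graph: maximum eccentricity. -/
noncomputable def graphDiam {α : Type*} (G : SimpleGraph α) : ℕ :=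
  sSup {d | ∃ v, eccentricity G v = d}

/-- The radius of a graph: minimum eccentricity. -/
noncomputable def graphRadius {α : Type*} (G : SimpleGraph α) : ℕ :=
  sInf {d | ∃ v, eccentricity G v = d}

/-- The interval `I[x,y]`: vertices lying on some shortest `x`–`y` path. -/
def interval {α : Type*} (G : SimpleGraph α) (x y : α) : Set α :=
  {w | G.dist x w + G.dist w y = G.dist x y}

/-- A graph is adjacency `k`-resolved if for every pair of adjacent vertices
`x, y` there is a vertex `w` with `d(y,w) ≥ k` and `x ∈ I[y,w]`, or
`d(x,w) ≥ k` and `y ∈ I[x,w]`. -/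
def AdjKResolved {α : Type*} (G : SimpleGraph α) (k : ℕ) : Prop :=
  ∀ x y : α, G.Adj x y →
    ∃ w : α, (k ≤ G.dist y w ∧ x ∈ interval G y w) ∨
      (k ≤ G.dist x w ∧ y ∈ interval G x w)

/-- The true twin equivalence relation: `u ≈ v` iff `N[u] = N[v]`. -/
def trueTwinSetoid {α : Type*} (G : SimpleGraph α) : Setoid α where
  r u v := insert u (G.neighborSet u) = insert v (G.neighborSet v)
  iseqv := ⟨fun _ => rfl, Eq.symm, Eq.trans⟩

section Aux

variable {α β : Type*} (G : SimpleGraph α) (H : SimpleGraph β)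

/-- Fix second coordinate: hom from G. -/
def homFst (b : β) : G →g strongProd G H where
  toFun a := (a, b)
  map_rel' h := Or.inr (Or.inl ⟨rfl, h⟩)

/-- Fix first coordinate: hom from H. -/
def homSnd (a : α) : H →g strongProd G H where
  toFun b := (a, b)
  map_rel' h := Or.inl ⟨rfl, h⟩

variable {G H}

lemma exists_prod_walk {a c : α} {b d : β} (p : G.Walk a c) (q : H.Walk b d) :
    ∃ r : (strongProd G H).Walk (a, b) (c, d), r.length = max p.length q.length := by
  induction p generalizing b d q with
  | nil =>
    exact ⟨q.map (homSnd G H _), by simp; exact Walk.length_map _ _⟩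
  | cons h p ih =>
    cases q with
    | nil =>
      refine ⟨(Walk.cons h p).map (homFst G H _), by
        simp; exact (Walk.length_cons _ _).trans (congrArg (· + 1) (Walk.length_map _ _))⟩
    | cons h' q =>
      obtain ⟨r, hr⟩ := ih q
      exact ⟨Walk.cons (Or.inr (Or.inr ⟨h, h'⟩)) r, (Walk.length_cons _ _).trans (by simp [hr])⟩

lemma fst_dist_le (hG : G.Connected) {x y : α × β} (r : (strongProd G H).Walk x y) :
    G.dist x.1 y.1 ≤ r.length := by
  induction r with
  | nil => simp
  | @cons u v w h r ih =>
    have h1 : G.dist u.1 v.1 ≤ 1 := by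
      rcases h with ⟨h1, _⟩ | ⟨_, h2⟩ | ⟨h2, _⟩
      · simp [h1, SimpleGraph.dist_self]
      · exact le_of_eq (dist_eq_one_iff_adj.2 h2)
      · exact le_of_eq (dist_eq_one_iff_adj.2 h2)
    calc G.dist u.1 w.1 ≤ G.dist u.1 v.1 + G.dist v.1 w.1 := hG.dist_triangle
      _ ≤ 1 + r.length := by gcongr
      _ = r.length + 1 := Nat.add_comm _ _

lemma snd_dist_le (hH : H.Connected) {x y : α × β} (r : (strongProd G H).Walk x y) :
    H.dist x.2 y.2 ≤ r.length := by
  induction r with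
  | nil => simp
  | @cons u v w h r ih =>
    have h1 : H.dist u.2 v.2 ≤ 1 := by
      rcases h with ⟨_, h2⟩ | ⟨h1, _⟩ | ⟨_, h2⟩
      · exact le_of_eq (dist_eq_one_iff_adj.2 h2)
      · simp [h1, SimpleGraph.dist_self]
      · exact le_of_eq (dist_eq_one_iff_adj.2 h2)
    calc H.dist u.2 w.2 ≤ H.dist u.2 v.2 + H.dist v.2 w.2 := hH.dist_triangle
      _ ≤ 1 + r.length := by gcongr
      _ = r.length + 1 := Nat.add_comm _ _

lemma strongProd_dist (hG : G.Connected) (hH : H.Connected) (x y : α × β) :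
    (strongProd G H).dist x y = max (G.dist x.1 y.1) (H.dist x.2 y.2) := by
  obtain ⟨p, hp⟩ := hG.exists_walk_length_eq_dist x.1 y.1
  obtain ⟨q, hq⟩ := hH.exists_walk_length_eq_dist x.2 y.2
  obtain ⟨r, hr⟩ := exists_prod_walk p q
  have hreach : (strongProd G H).Reachable (x.1, x.2) (y.1, y.2) := ⟨r⟩
  apply le_antisymm
  · calc (strongProd G H).dist x y = (strongProd G H).dist (x.1, x.2) (y.1, y.2) := rfl
      _ ≤ r.length := dist_le r
      _ = _ := by rw [hr, hp, hq]
  · obtain ⟨s, hs⟩ := Reachable.exists_walk_length_eq_dist (by exact hreach)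
    refine max_le ?_ ?_
    · calc G.dist x.1 y.1 ≤ s.length := fst_dist_le hG s
        _ = _ := hs
    · calc H.dist x.2 y.2 ≤ s.length := snd_dist_le hH s
        _ = _ := hs

lemma exists_adj [Fintype α] (hG : G.Connected) (h2 : 2 ≤ Fintype.card α) (a : α) :
    ∃ a', G.Adj a a' := by
  obtain ⟨v, hv⟩ := Fintype.exists_ne_of_one_lt_card (by omega) a
  obtain ⟨p⟩ := hG a v
  cases p with
  | nil => exact absurd rfl hv
  | cons h p => exact ⟨_, h⟩

lemma univ_isLocalMetricGenerator [Fintype α] (hG : G.Connected) :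
    IsLocalMetricGenerator G ↑(Finset.univ : Finset α) := by
  intro u v huv
  refine ⟨u, by simp, ?_⟩
  rw [dist_self, dist_comm, dist_eq_one_iff_adj.2 huv]
  omega

lemma localMetricDim_spec [Fintype α] (hG : G.Connected) :
    ∃ S : Finset α, S.card = localMetricDim G ∧ IsLocalMetricGenerator G ↑S := by
  have hne : {n | ∃ S : Finset α, S.card = n ∧ IsLocalMetricGenerator G ↑S}.Nonempty :=
    ⟨_, Finset.univ, rfl, univ_isLocalMetricGenerator hG⟩
  exact Nat.sInf_mem hne

end Aux

/-- general bounds on the local metric dimension of a strong product. -/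
theorem stmt0 {α β : Type*} [Fintype α] [Fintype β]
    (G : SimpleGraph α) (H : SimpleGraph β) (hG : G.Connected) (hH : H.Connected)
    (hn1 : 2 ≤ Fintype.card α) (hn2 : 2 ≤ Fintype.card β) :
    3 ≤ localMetricDim (strongProd G H) ∧
      localMetricDim (strongProd G H) ≤
        Fintype.card α * localMetricDim H + Fintype.card β * localMetricDim G -
          localMetricDim G * localMetricDim H := by
  classical
  have hP : (strongProd G H).Connected := by
    rw [connected_iff]
    refine ⟨fun x y => ?_, ?_⟩
    · obtain ⟨p⟩ := hG x.1 y.1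
      obtain ⟨q⟩ := hH x.2 y.2
      obtain ⟨r, -⟩ := exists_prod_walk (H := H) p q
      exact ⟨r⟩
    · have : Nonempty α := Fintype.card_pos_iff.1 (by omega)
      have : Nonempty β := Fintype.card_pos_iff.1 (by omega)
      exact instNonemptyProd
  have hdist : ∀ x y : α × β,
      (strongProd G H).dist x y = max (G.dist x.1 y.1) (H.dist x.2 y.2) :=
    strongProd_dist hG hH
  constructor
  · -- lower bound
    obtain ⟨S, hcard, hgen⟩ := localMetricDim_spec hP
    rw [← hcard]
    by_contra hlt
    push_neg at hlt
    -- S is nonempty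
    have : Nonempty α := Fintype.card_pos_iff.1 (by omega)
    have : Nonempty β := Fintype.card_pos_iff.1 (by omega)
    obtain ⟨a⟩ := ‹Nonempty α›
    obtain ⟨b⟩ := ‹Nonempty β›
    obtain ⟨a', ha'⟩ := exists_adj hG hn1 a
    have hSne : S.Nonempty := by
      obtain ⟨s, hs, -⟩ := hgen (a, b) (a', b) (Or.inr (Or.inl ⟨rfl, ha'⟩))
      exact ⟨s, hs⟩
    obtain ⟨⟨c, d⟩, hs1⟩ := hSne
    obtain ⟨c', hc'⟩ := exists_adj hG hn1 c
    obtain ⟨d', hd'⟩ := exists_adj hH hn2 d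
    have e1 : (strongProd G H).dist ((c', d) : α × β) ((c, d) : α × β) = 1 := by
      rw [hdist]
      simp [SimpleGraph.dist_self, dist_eq_one_iff_adj.2 hc'.symm]
    have e2 : (strongProd G H).dist ((c, d') : α × β) ((c, d) : α × β) = 1 := by
      rw [hdist]
      simp [SimpleGraph.dist_self, dist_eq_one_iff_adj.2 hd'.symm]
    have e3 : (strongProd G H).dist ((c', d') : α × β) ((c, d) : α × β) = 1 := by
      rw [hdist]
      simp [SimpleGraph.dist_self, dist_eq_one_iff_adj.2 hc'.symm,
        dist_eq_one_iff_adj.2 hd'.symm]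
    -- the three pairwise adjacent vertices
    obtain ⟨sxy, hsxy, hnxy⟩ := hgen (c', d) (c, d')
      (Or.inr (Or.inr ⟨hc'.symm, hd'⟩))
    obtain ⟨sxz, hsxz, hnxz⟩ := hgen (c', d) (c', d') (Or.inl ⟨rfl, hd'⟩)
    obtain ⟨syz, hsyz, hnyz⟩ := hgen (c, d') (c', d') (Or.inr (Or.inl ⟨rfl, hc'⟩))
    have hxy' : sxy ∈ S.erase (c, d) := by
      refine Finset.mem_erase.2 ⟨?_, hsxy⟩
      rintro rfl; rw [e1, e2] at hnxy; exact hnxy rfl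
    have hxz' : sxz ∈ S.erase (c, d) := by
      refine Finset.mem_erase.2 ⟨?_, hsxz⟩
      rintro rfl; rw [e1, e3] at hnxz; exact hnxz rfl
    have hyz' : syz ∈ S.erase (c, d) := by
      refine Finset.mem_erase.2 ⟨?_, hsyz⟩
      rintro rfl; rw [e2, e3] at hnyz; exact hnyz rfl
    have hle1 : (S.erase (c, d)).card ≤ 1 := by
      have := Finset.card_erase_of_mem hs1
      omega
    have heq1 : sxz = sxy := Finset.card_le_one.1 hle1 _ hxz' _ hxy'
    have heq2 : syz = sxy := Finset.card_le_one.1 hle1 _ hyz' _ hxy'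
    rw [heq1] at hnxz
    rw [heq2] at hnyz
    obtain ⟨e, f⟩ := sxy
    rw [hdist] at hnxy hnxz hnyz
    rw [hdist] at hnxy hnxz hnyz
    simp only at hnxy hnxz hnyz
    have t1 : G.dist c e ≤ G.dist c c' + G.dist c' e := hG.dist_triangle
    have t2 : G.dist c' e ≤ G.dist c' c + G.dist c e := hG.dist_triangle
    have t3 : H.dist d f ≤ H.dist d d' + H.dist d' f := hH.dist_triangle
    have t4 : H.dist d' f ≤ H.dist d' d + H.dist d f := hH.dist_triangle
    rw [dist_eq_one_iff_adj.2 hc'] at t1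
    rw [dist_eq_one_iff_adj.2 hc'.symm] at t2
    rw [dist_eq_one_iff_adj.2 hd'] at t3
    rw [dist_eq_one_iff_adj.2 hd'.symm] at t4
    omega
  · -- upper bound
    obtain ⟨A, hA, hAgen⟩ := localMetricDim_spec hG
    obtain ⟨B, hB, hBgen⟩ := localMetricDim_spec hH
    set S : Finset (α × β) :=
      A ×ˢ (Finset.univ : Finset β) ∪ (Finset.univ : Finset α) ×ˢ B with hS
    have hgen : IsLocalMetricGenerator (strongProd G H) ↑S := by
      rintro ⟨u1, u2⟩ ⟨v1, v2⟩ hadj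
      rcases hadj with ⟨h1, h2⟩ | ⟨h1, h2⟩ | ⟨h1, h2⟩
      · -- u1 = v1, H.Adj u2 v2
        obtain ⟨b, hbB, hbne⟩ := hBgen u2 v2 h2
        refine ⟨(u1, b), by simp [hS, hbB], ?_⟩
        rw [hdist, hdist]
        simp only at h1 ⊢
        rw [← h1]
        simp [SimpleGraph.dist_self]
        exact hbne
      · -- u2 = v2, G.Adj u1 v1
        obtain ⟨a, haA, hane⟩ := hAgen u1 v1 h2
        refine ⟨(a, u2), by simp [hS, haA], ?_⟩
        rw [hdist, hdist]
        simp only at h1 ⊢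
        rw [← h1]
        simp [SimpleGraph.dist_self]
        exact hane
      · -- G.Adj u1 v1 and H.Adj u2 v2
        obtain ⟨a, haA, hane⟩ := hAgen u1 v1 h1
        rcases lt_or_gt_of_ne hane with hlt | hlt
        · refine ⟨(a, u2), by simp [hS, haA], ?_⟩
          rw [hdist, hdist]
          simp only
          rw [SimpleGraph.dist_self, dist_eq_one_iff_adj.2 h2.symm]
          omega
        · refine ⟨(a, v2), by simp [hS, haA], ?_⟩
          rw [hdist, hdist]
          simp only
          rw [SimpleGraph.dist_self, dist_eq_one_iff_adj.2 h2]
          omega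
    have hle : localMetricDim (strongProd G H) ≤ S.card :=
      Nat.sInf_le ⟨S, rfl, hgen⟩
    have hinter : (A ×ˢ (Finset.univ : Finset β)) ∩ ((Finset.univ : Finset α) ×ˢ B)
        = A ×ˢ B := by
      rw [Finset.product_inter_product]
      simp
    have hcard := Finset.card_union_add_card_inter
      (A ×ˢ (Finset.univ : Finset β)) ((Finset.univ : Finset α) ×ˢ B)
    rw [hinter, Finset.card_product, Finset.card_product, Finset.card_product,
      Finset.card_univ, Finset.card_univ, hA, hB] at hcard
    have key : Fintype.card α * localMetricDim H + Fintype.card β * localMetricDim G -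
        localMetricDim G * localMetricDim H = S.card := by
      rw [mul_comm (Fintype.card β) (localMetricDim G)]
      have h' : Fintype.card α * localMetricDim H + localMetricDim G * Fintype.card β
          = S.card + localMetricDim G * localMetricDim H := by linarith
      rw [h', Nat.add_sub_cancel]
    rw [key] at *
    exact hle
end

section
/- Let G and H be connected graphs, each with at least two vertices, of order n₁ and n₂ and having t₁ and t₂ true twin equivalence classes respectively. Then dim_l(G ⊠ H) ≥ n₁n₂ − t₁t₂. -/
open SimpleGraph

section Aux

variable {α β : Type*}

lemma twin_adj {G : SimpleGraph α} {u v : α}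
    (h : insert u (G.neighborSet u) = insert v (G.neighborSet v)) (huv : u ≠ v) :
    G.Adj u v := by
  have hv : v ∈ insert u (G.neighborSet u) := by rw [h]; exact Set.mem_insert _ _
  rcases hv with h' | h'
  · exact absurd h'.symm huv
  · exact h'

lemma twin_dist_le {G : SimpleGraph α} {u v w : α}
    (h : insert u (G.neighborSet u) = insert v (G.neighborSet v)) (huv : u ≠ v)
    (hwu : w ≠ u) : G.dist v w ≤ G.dist u w := by
  by_cases hr : G.Reachable u w
  · obtain ⟨p, hp⟩ := hr.exists_walk_length_eq_dist
    cases p with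
    | nil => exact absurd rfl hwu
    | cons hadj q =>
      rename_i x
      by_cases hx : x = v
      · have hq := SimpleGraph.dist_le q
        rw [← hx]
        have hl : q.length + 1 = G.dist u w := by simpa using hp
        omega
      · have hxu : x ∈ G.neighborSet u := hadj
        have hx2 : x ∈ insert v (G.neighborSet v) := h ▸ Set.mem_insert_of_mem _ hxu
        have hvx : G.Adj v x := hx2.resolve_left hx
        have := SimpleGraph.dist_le (SimpleGraph.Walk.cons hvx q)
        simpa [← hp, SimpleGraph.Walk.length_cons] using this
  · have h0 : G.dist u w = 0 :=
      SimpleGraph.dist_eq_zero_iff_eq_or_not_reachable.mpr (Or.inr hr)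
    have hr' : ¬ G.Reachable v w := fun hvw =>
      hr ((twin_adj h huv).reachable.trans hvw)
    have h0' : G.dist v w = 0 :=
      SimpleGraph.dist_eq_zero_iff_eq_or_not_reachable.mpr (Or.inr hr')
    omega

lemma twin_dist {G : SimpleGraph α} {u v w : α}
    (h : insert u (G.neighborSet u) = insert v (G.neighborSet v)) (huv : u ≠ v)
    (hwu : w ≠ u) (hwv : w ≠ v) : G.dist u w = G.dist v w :=
  le_antisymm (twin_dist_le h.symm huv.symm hwv) (twin_dist_le h huv hwu)

lemma strongProd_closedNbhd (G : SimpleGraph α) (H : SimpleGraph β) (a : α) (b : β) :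
    insert (a, b) ((strongProd G H).neighborSet (a, b)) =
      (insert a (G.neighborSet a)) ×ˢ (insert b (H.neighborSet b)) := by
  ext ⟨c, d⟩
  simp only [Set.mem_insert_iff, SimpleGraph.mem_neighborSet, Set.mem_prod,
    strongProd, Prod.mk.injEq, eq_comm]
  tauto

lemma strongProd_setoid (G : SimpleGraph α) (H : SimpleGraph β) :
    trueTwinSetoid (strongProd G H) = (trueTwinSetoid G).prod (trueTwinSetoid H) := by
  apply Setoid.ext
  rintro ⟨a, b⟩ ⟨c, d⟩
  show insert _ _ = insert _ _ ↔ _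
  rw [strongProd_closedNbhd, strongProd_closedNbhd,
    Set.prod_eq_prod_iff_of_nonempty
      ⟨(a, b), Set.mk_mem_prod (Set.mem_insert _ _) (Set.mem_insert _ _)⟩]
  exact Iff.rfl

end Aux

/-- `dim_l(G ⊠ H) ≥ n₁n₂ − t₁t₂`. -/
theorem stmt5 {α β : Type*} [Fintype α] [Fintype β]
    (G : SimpleGraph α) (H : SimpleGraph β)
    (hG : G.Connected) (hH : H.Connected)
    (hn1 : 2 ≤ Fintype.card α) (hn2 : 2 ≤ Fintype.card β)
    (t1 t2 : ℕ)
    (ht1 : Nat.card (Quotient (trueTwinSetoid G)) = t1)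
    (ht2 : Nat.card (Quotient (trueTwinSetoid H)) = t2) :
    Fintype.card α * Fintype.card β - t1 * t2 ≤ localMetricDim (strongProd G H) := by
    classical
  -- the set defining localMetricDim is nonempty: univ is a generator
  set P := strongProd G H with hP
  have hne : {n | ∃ S : Finset (α × β), S.card = n ∧ IsLocalMetricGenerator P ↑S}.Nonempty := by
    refine ⟨(Finset.univ : Finset (α × β)).card, Finset.univ, rfl, ?_⟩
    intro u v huv
    refine ⟨u, by simp, ?_⟩
    have h1 : P.dist u u = 0 := SimpleGraph.dist_self
    have h2 : 0 < P.dist v u := huv.symm.reachable.pos_dist_of_ne huv.ne'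
    omega
  -- number of twin classes of the product
  have hcard : Nat.card (Quotient (trueTwinSetoid P)) = t1 * t2 := by
    rw [hP, strongProd_setoid]
    rw [← Nat.card_congr (Setoid.prodQuotientEquiv (trueTwinSetoid G) (trueTwinSetoid H))]
    rw [Nat.card_prod, ht1, ht2]
  refine le_csInf hne ?_
  rintro n ⟨S, rfl, hS⟩
  -- the quotient map is injective on Sᶜ
  have hinj : Function.Injective (fun x : ↥(Sᶜ) => (Quotient.mk (trueTwinSetoid P) x.1)) := by
    rintro ⟨u, hu⟩ ⟨v, hv⟩ hquv
    by_contra hne'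
    have huv : u ≠ v := fun h => hne' (by simpa using h)
    have htw : insert u (P.neighborSet u) = insert v (P.neighborSet v) :=
      Quotient.exact hquv
    obtain ⟨s, hs, hd⟩ := hS u v (twin_adj htw huv)
    have hu' : u ∉ S := by simpa using hu
    have hv' : v ∉ S := by simpa using hv
    have hsu : s ≠ u := fun h => hu' (h ▸ hs)
    have hsv : s ≠ v := fun h => hv' (h ▸ hs)
    exact hd (twin_dist htw huv hsu hsv)
  have hle : (Sᶜ : Finset (α × β)).card ≤ t1 * t2 := by
    rw [← hcard, ← Nat.card_eq_finsetCard]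
    exact Nat.card_le_card_of_injective _ hinj
  have h1 : (Sᶜ : Finset (α × β)).card = Fintype.card (α × β) - S.card :=
    Finset.card_compl S
  have h2 : S.card ≤ Fintype.card (α × β) := S.card_le_univ
  have h3 : Fintype.card (α × β) = Fintype.card α * Fintype.card β := Fintype.card_prod α β
  omega
end

section
/- Let H be a connected graph of order n' ≥ 2 having t true twin equivalence classes, and let n ≥ 2 be an integer. Then dim_l(K_n ⊠ H) = nn' − t, where K_n is the complete graph on n vertices. In particular, if H has no pair of distinct true twin vertices, then dim_l(K_n ⊠ H) = n'(n − 1). -/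
open SimpleGraph

section Aux
variable {β : Type*} {H : SimpleGraph β} {n : ℕ}

lemma lift_walk {x c : β} (p : H.Walk x c) (j : Fin n) :
    ∃ W : (strongProd (⊤ : SimpleGraph (Fin n)) H).Walk (j, x) (j, c),
      W.length = p.length := by
  induction p with
  | nil => exact ⟨.nil, rfl⟩
  | @cons u v w h q ih =>
    obtain ⟨W, hW⟩ := ih
    have hadj : (strongProd (⊤ : SimpleGraph (Fin n)) H).Adj (j, u) (j, v) :=
      Or.inl ⟨rfl, h⟩
    exact ⟨.cons hadj W, by simp [hW]⟩

lemma proj_dist_le (hH : H.Connected) {u v : Fin n × β}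
    (W : (strongProd (⊤ : SimpleGraph (Fin n)) H).Walk u v) :
    H.dist u.2 v.2 ≤ W.length := by
  induction W with
  | nil => simp
  | @cons a x c h q ih =>
    have h1 : H.dist a.2 x.2 ≤ 1 := by
      rcases h with ⟨_, h2⟩ | ⟨h2, _⟩ | ⟨_, h2⟩
      · exact (dist_eq_one_iff_adj.mpr h2).le
      · simp [h2, SimpleGraph.dist_self]
      · exact (dist_eq_one_iff_adj.mpr h2).le
    calc H.dist a.2 c.2 ≤ H.dist a.2 x.2 + H.dist x.2 c.2 := hH.dist_triangle
      _ ≤ 1 + q.length := add_le_add h1 ih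
      _ = (SimpleGraph.Walk.cons h q).length := by
          simp [SimpleGraph.Walk.length_cons, add_comm]

lemma dist_sp [DecidableEq β] (hH : H.Connected) (i j : Fin n) (b c : β) :
    (strongProd (⊤ : SimpleGraph (Fin n)) H).dist (i, b) (j, c) =
      if b = c then (if i = j then 0 else 1) else H.dist b c := by
  by_cases hbc : b = c
  · subst hbc
    rw [if_pos rfl]
    by_cases hij : i = j
    · subst hij; simp
    · rw [if_neg hij]
      exact dist_eq_one_iff_adj.mpr (Or.inr (Or.inl ⟨rfl, by simpa using hij⟩))
  · rw [if_neg hbc]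
    obtain ⟨p, hp⟩ := (hH b c).exists_walk_length_eq_dist
    cases p with
    | nil => exact absurd rfl hbc
    | @cons _ x _ h q =>
        obtain ⟨W, hW⟩ := lift_walk q j
        have hadj : (strongProd (⊤ : SimpleGraph (Fin n)) H).Adj (i, b) (j, x) := by
          by_cases hij : i = j
          · exact Or.inl ⟨hij, h⟩
          · exact Or.inr (Or.inr ⟨by simpa using hij, h⟩)
        have hle : (strongProd (⊤ : SimpleGraph (Fin n)) H).dist (i, b) (j, c)
            ≤ H.dist b c := by
          have := SimpleGraph.dist_le (SimpleGraph.Walk.cons hadj W)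
          simpa [hW, ← hp] using this
        have hge : H.dist b c ≤
            (strongProd (⊤ : SimpleGraph (Fin n)) H).dist (i, b) (j, c) := by
          have hr : (strongProd (⊤ : SimpleGraph (Fin n)) H).Reachable (i, b) (j, c) :=
            ⟨SimpleGraph.Walk.cons hadj W⟩
          obtain ⟨W', hW'⟩ := hr.exists_walk_length_eq_dist
          simpa [hW'] using proj_dist_le hH W'
        omega

end Aux

section Twin
variable {β : Type*} {H : SimpleGraph β}

lemma twin_adj_s8 {b c : β} (hbc : b ≠ c)
    (h : insert b (H.neighborSet b) = insert c (H.neighborSet c)) : H.Adj b c := by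
  have hb : b ∈ insert c (H.neighborSet c) := h ▸ Set.mem_insert b _
  rcases hb with h' | h'
  · exact absurd h' hbc
  · exact ((H.mem_neighborSet c b).mp h').symm

lemma twin_dist_le_s8 (hH : H.Connected) {b c : β}
    (h : insert b (H.neighborSet b) = insert c (H.neighborSet c))
    {a : β} (hab : a ≠ b) (hac : a ≠ c) : H.dist b a ≤ H.dist c a := by
  obtain ⟨p, hp⟩ := (hH c a).exists_walk_length_eq_dist
  cases p with
  | nil => exact absurd rfl hac
  | @cons _ x _ h1 q =>
    by_cases hxb : x = b
    · subst hxb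
      have := SimpleGraph.dist_le q
      simp only [SimpleGraph.Walk.length_cons] at hp
      omega
    · have hx : x ∈ insert b (H.neighborSet b) := by
        rw [h]; exact Set.mem_insert_of_mem _ ((H.mem_neighborSet c x).mpr h1)
      have hbx : H.Adj b x := by
        rcases hx with h' | h'
        · exact absurd h' hxb
        · exact (H.mem_neighborSet b x).mp h'
      have := SimpleGraph.dist_le (SimpleGraph.Walk.cons hbx q)
      simp only [SimpleGraph.Walk.length_cons] at this hp
      omega

lemma twin_dist_s8 (hH : H.Connected) {b c : β}
    (h : insert b (H.neighborSet b) = insert c (H.neighborSet c))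
    {a : β} (hab : a ≠ b) (hac : a ≠ c) : H.dist b a = H.dist c a :=
  le_antisymm (twin_dist_le_s8 hH h hab hac) (twin_dist_le_s8 hH h.symm hac hab)

lemma nontwin_side (hH : H.Connected) {b c a : β} (hadj : H.Adj b c)
    (h1 : a ∈ insert b (H.neighborSet b)) (h2 : a ∉ insert c (H.neighborSet c)) :
    a ≠ b ∧ a ≠ c ∧ H.dist b a ≠ H.dist c a := by
  have hab : a ≠ b := by
    rintro rfl
    exact h2 (Set.mem_insert_of_mem _ ((H.mem_neighborSet c a).mpr hadj.symm))
  have hac : a ≠ c := by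
    rintro rfl
    exact h2 (Set.mem_insert a _)
  have hba : H.Adj b a := by
    rcases h1 with h' | h'
    · exact absurd h' hab
    · exact (H.mem_neighborSet b a).mp h'
  have hd1 : H.dist b a = 1 := SimpleGraph.dist_eq_one_iff_adj.mpr hba
  have hd2 : H.dist c a ≠ 1 := by
    intro hh
    exact h2 (Set.mem_insert_of_mem _
      ((H.mem_neighborSet c a).mpr (SimpleGraph.dist_eq_one_iff_adj.mp hh)))
  rw [hd1]
  exact ⟨hab, hac, fun hh => hd2 hh.symm⟩

lemma nontwin_exists (hH : H.Connected) {b c : β} (hadj : H.Adj b c)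
    (h : insert b (H.neighborSet b) ≠ insert c (H.neighborSet c)) :
    ∃ a, a ≠ b ∧ a ≠ c ∧ H.dist b a ≠ H.dist c a := by
  have hex : ∃ a, (a ∈ insert b (H.neighborSet b) ∧ a ∉ insert c (H.neighborSet c)) ∨
      (a ∈ insert c (H.neighborSet c) ∧ a ∉ insert b (H.neighborSet b)) := by
    by_contra hcon
    push_neg at hcon
    apply h
    ext a
    have := hcon a
    tauto
  obtain ⟨a, ⟨h1, h2⟩ | ⟨h1, h2⟩⟩ := hex
  · exact ⟨a, nontwin_side hH hadj h1 h2⟩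
  · obtain ⟨hac, hab, hd⟩ := nontwin_side hH hadj.symm h1 h2
    exact ⟨a, hab, hac, fun hh => hd hh.symm⟩

end Twin


/-- `dim_l(K_n ⊠ H) = nn' − t`; in particular, if `H` has no pair of
distinct true twin vertices, then `dim_l(K_n ⊠ H) = n'(n − 1)`. -/
theorem stmt8 {β : Type*} [Fintype β] (H : SimpleGraph β) (hH : H.Connected)
    (hn' : 2 ≤ Fintype.card β)
    (t : ℕ) (ht : Nat.card (Quotient (trueTwinSetoid H)) = t)
    (n : ℕ) (hn : 2 ≤ n) :
    localMetricDim (strongProd (⊤ : SimpleGraph (Fin n)) H) =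
        n * Fintype.card β - t ∧
      ((∀ u v : β,
          insert u (H.neighborSet u) = insert v (H.neighborSet v) → u = v) →
        localMetricDim (strongProd (⊤ : SimpleGraph (Fin n)) H) =
          Fintype.card β * (n - 1)) := by
  classical
  letI st : Setoid β := trueTwinSetoid H
  have hdist : ∀ (i j : Fin n) (b c : β),
      (strongProd (⊤ : SimpleGraph (Fin n)) H).dist (i, b) (j, c) =
        if b = c then (if i = j then 0 else 1) else H.dist b c :=
    fun i j b c => dist_sp hH i j b c
  set i0 : Fin n := ⟨0, by omega⟩ with hi0def
  set i1 : Fin n := ⟨1, by omega⟩ with hi1def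
  have hi01 : i0 ≠ i1 := by simp [hi0def, hi1def, Fin.ext_iff]
  set rep : β → β := fun b => (Quotient.mk st b).out with hrepdef
  have hrep_spec : ∀ b, insert (rep b) (H.neighborSet (rep b)) =
      insert b (H.neighborSet b) := fun b => Quotient.mk_out b
  have hrep_eq : ∀ {b c : β},
      insert b (H.neighborSet b) = insert c (H.neighborSet c) → rep b = rep c := by
    intro b c h
    have : (Quotient.mk st b) = Quotient.mk st c := Quotient.sound h
    simp only [hrepdef, this]
  set R : Finset (Fin n × β) :=
    Finset.univ.filter (fun x => x.1 = i0 ∧ rep x.2 = x.2) with hRdef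
  have hmemR : ∀ x : Fin n × β, x ∈ R ↔ (x.1 = i0 ∧ rep x.2 = x.2) := by
    intro x; simp [hRdef]
  have hRcard : R.card = t := by
    have hF : ∀ q : Quotient st, ((i0, q.out) : Fin n × β) ∈ R := by
      intro q
      rw [hmemR]
      refine ⟨rfl, ?_⟩
      simp only [hrepdef, Quotient.out_eq]
    have hbij : Function.Bijective
        (fun q : Quotient st => (⟨(i0, q.out), hF q⟩ : {x // x ∈ R})) := by
      constructor
      · intro q q' hqq'
        have : q.out = q'.out := congrArg (fun z : {x // x ∈ R} => z.1.2) hqq'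
        exact Quotient.out_injective this
      · rintro ⟨⟨i, b⟩, hx⟩
        rw [hmemR] at hx
        obtain ⟨hxi, hxb⟩ := hx
        refine ⟨Quotient.mk st b, ?_⟩
        apply Subtype.ext
        simp only at hxi ⊢
        rw [Prod.ext_iff]
        exact ⟨hxi.symm, hxb⟩
    have := Nat.card_eq_of_bijective _ hbij
    rw [ht] at this
    rw [this, Nat.card_eq_finsetCard]
  set S : Finset (Fin n × β) := Finset.univ \ R with hSdef
  have hmemS : ∀ x : Fin n × β, x ∈ S ↔ ¬(x.1 = i0 ∧ rep x.2 = x.2) := by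
    intro x; simp [hSdef, hmemR]
  have hScard : S.card = n * Fintype.card β - t := by
    rw [hSdef, Finset.card_sdiff_of_subset (Finset.subset_univ _), hRcard]
    simp [Fintype.card_prod]
  have hSgen : IsLocalMetricGenerator (strongProd (⊤ : SimpleGraph (Fin n)) H) ↑S := by
    rintro ⟨i, b⟩ ⟨j, c⟩ hadj
    by_cases hbc : b = c
    · subst hbc
      have hij : i ≠ j := by
        rcases hadj with ⟨_, h2⟩ | ⟨_, h2⟩ | ⟨h2, _⟩
        · exact absurd h2 H.irrefl
        · simpa using h2
        · simpa using h2
      by_cases hiS : ((i, b) : Fin n × β) ∈ S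
      · refine ⟨(i, b), Finset.mem_coe.mpr hiS, ?_⟩
        rw [hdist i i b b, hdist j i b b]
        simp [Ne.symm hij]
      · have hjS : ((j, b) : Fin n × β) ∈ S := by
          rw [hmemS] at hiS ⊢
          rw [not_not] at hiS
          rintro ⟨hj0, _⟩
          exact hij (hiS.1.trans hj0.symm)
        refine ⟨(j, b), Finset.mem_coe.mpr hjS, ?_⟩
        rw [hdist i j b b, hdist j j b b]
        simp [hij]
    · have hHadj : H.Adj b c := by
        rcases hadj with ⟨_, h2⟩ | ⟨h2, _⟩ | ⟨_, h2⟩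
        · exact h2
        · exact absurd h2 hbc
        · exact h2
      by_cases htw : insert b (H.neighborSet b) = insert c (H.neighborSet c)
      · have h1 : H.dist c b = 1 := SimpleGraph.dist_eq_one_iff_adj.mpr hHadj.symm
        have h1' : H.dist b c = 1 := SimpleGraph.dist_eq_one_iff_adj.mpr hHadj
        by_cases hiS : ((i, b) : Fin n × β) ∈ S
        · refine ⟨(i, b), Finset.mem_coe.mpr hiS, ?_⟩
          rw [hdist i i b b, hdist j i c b]
          simp [Ne.symm hbc, h1]
        · have hjS : ((j, c) : Fin n × β) ∈ S := by
            rw [hmemS] at hiS ⊢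
            rw [not_not] at hiS
            rintro ⟨hj0, hjrep⟩
            have : rep b = rep c := hrep_eq htw
            exact hbc ((hiS.2.symm.trans this).trans hjrep)
          refine ⟨(j, c), Finset.mem_coe.mpr hjS, ?_⟩
          rw [hdist i j b c, hdist j j c c]
          simp [hbc, h1']
      · obtain ⟨a, hab, hac, hd⟩ := nontwin_exists hH hHadj htw
        refine ⟨(i1, a), Finset.mem_coe.mpr ?_, ?_⟩
        · rw [hmemS]
          rintro ⟨h1, _⟩
          exact hi01 (h1.symm)
        · rw [hdist i i1 b a, hdist j i1 c a]
          simpa [Ne.symm hab, Ne.symm hac] using hd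
  have hub : (n * Fintype.card β - t) ∈
      {m | ∃ S : Finset (Fin n × β), S.card = m ∧
        IsLocalMetricGenerator (strongProd (⊤ : SimpleGraph (Fin n)) H) ↑S} :=
    ⟨S, hScard, hSgen⟩
  have hlb : ∀ m ∈ {m | ∃ S : Finset (Fin n × β), S.card = m ∧
      IsLocalMetricGenerator (strongProd (⊤ : SimpleGraph (Fin n)) H) ↑S},
      n * Fintype.card β - t ≤ m := by
    rintro m ⟨S', hS'card, hS'gen⟩
    set C : Finset (Fin n × β) := Finset.univ \ S' with hCdef
    have hmemC : ∀ x : Fin n × β, x ∈ C ↔ x ∉ S' := by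
      intro x; simp [hCdef]
    have hinj : Function.Injective
        (fun x : {x // x ∈ C} => Quotient.mk st x.1.2) := by
      rintro ⟨⟨i, b⟩, hx⟩ ⟨⟨j, c⟩, hy⟩ hq
      simp only at hq
      have htw : insert b (H.neighborSet b) = insert c (H.neighborSet c) :=
        Quotient.exact hq
      rw [hmemC] at hx hy
      apply Subtype.ext
      simp only [Prod.ext_iff]
      by_cases hbceq : b = c
      · subst hbceq
        refine ⟨?_, rfl⟩
        by_contra hij
        obtain ⟨⟨k, a⟩, hka, hne⟩ := hS'gen (i, b) (j, b)
          (Or.inr (Or.inl ⟨rfl, by simpa using hij⟩))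
        rw [hdist i k b a, hdist j k b a] at hne
        by_cases hba : b = a
        · subst hba
          rw [if_pos rfl, if_pos rfl] at hne
          have : k = i ∨ k = j := by
            by_contra hk
            push_neg at hk
            rw [if_neg (fun h => hk.1 h.symm), if_neg (fun h => hk.2 h.symm)] at hne
            exact hne rfl
          rcases this with rfl | rfl
          · exact hx (Finset.mem_coe.mp hka)
          · exact hy (Finset.mem_coe.mp hka)
        · rw [if_neg hba, if_neg hba] at hne
          exact hne rfl
      · exfalso
        have hHadj : H.Adj b c := twin_adj_s8 hbceq htw
        have hGadj : (strongProd (⊤ : SimpleGraph (Fin n)) H).Adj (i, b) (j, c) := by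
          by_cases hij : i = j
          · exact Or.inl ⟨hij, hHadj⟩
          · exact Or.inr (Or.inr ⟨by simpa using hij, hHadj⟩)
        obtain ⟨⟨k, a⟩, hka, hne⟩ := hS'gen (i, b) (j, c) hGadj
        rw [hdist i k b a, hdist j k c a] at hne
        by_cases hba : b = a
        · subst hba
          rw [if_pos rfl, if_neg (Ne.symm hbceq)] at hne
          rw [SimpleGraph.dist_eq_one_iff_adj.mpr hHadj.symm] at hne
          have hki : k = i := by
            by_contra hk
            rw [if_neg (fun h => hk h.symm)] at hne
            exact hne rfl
          subst hki
          exact hx (Finset.mem_coe.mp hka)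
        · by_cases hca : c = a
          · subst hca
            rw [if_neg hba, if_pos rfl] at hne
            rw [SimpleGraph.dist_eq_one_iff_adj.mpr hHadj] at hne
            have hkj : k = j := by
              by_contra hk
              rw [if_neg (fun h => hk h.symm)] at hne
              exact hne rfl
            subst hkj
            exact hy (Finset.mem_coe.mp hka)
          · rw [if_neg hba, if_neg hca] at hne
            exact hne (twin_dist_s8 hH htw (fun h => hba h.symm) (fun h => hca h.symm))
    have hCle : C.card ≤ t := by
      have h1 : Nat.card {x // x ∈ C} ≤ Nat.card (Quotient st) :=
        Nat.card_le_card_of_injective _ hinj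
      rwa [Nat.card_eq_finsetCard, ht] at h1
    have hCcard : C.card = n * Fintype.card β - S'.card := by
      rw [hCdef, Finset.card_sdiff_of_subset (Finset.subset_univ _)]
      simp [Fintype.card_prod]
    have hle : S'.card ≤ n * Fintype.card β := by
      have := Finset.card_le_univ S'
      simpa [Fintype.card_prod] using this
    rw [← hS'card]
    omega
  have hmain : localMetricDim (strongProd (⊤ : SimpleGraph (Fin n)) H) =
      n * Fintype.card β - t := by
    rw [localMetricDim]
    exact le_antisymm (Nat.sInf_le hub) (le_csInf ⟨_, hub⟩ hlb)
  refine ⟨hmain, fun hno => ?_⟩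
  have ht' : t = Fintype.card β := by
    rw [← ht]
    have hbij : Function.Bijective (Quotient.mk st) :=
      ⟨fun a b hab => hno a b (Quotient.exact hab), Quotient.mk_surjective⟩
    rw [← Nat.card_eq_of_bijective _ hbij, Nat.card_eq_fintype_card]
  rw [hmain, ht', Nat.mul_sub, Nat.mul_one, Nat.mul_comm]
end

section
/- Let H be an adjacency k-resolved connected graph of order n₂ and let G be a connected graph with at least two vertices, of order n₁, having t₁ true twin equivalence classes and diameter D(G) < k. If dim_l(G) = n₁ − t₁, then dim_l(G ⊠ H) = n₂(n₁ − t₁). -/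
open SimpleGraph

namespace StrongAux
open SimpleGraph

variable {α β : Type*} {G : SimpleGraph α} {H : SimpleGraph β}

/-- Lift a walk in `G` to a walk in the strong product with fixed second coordinate. -/
def liftWalk1 (b : β) : ∀ {a c : α}, G.Walk a c → (strongProd G H).Walk (a, b) (c, b)
  | _, _, .nil => .nil
  | _, _, @SimpleGraph.Walk.cons _ _ a v c h p =>
    .cons (show (strongProd G H).Adj (a, b) (v, b) from Or.inr (Or.inl ⟨rfl, h⟩))
      (liftWalk1 b p)

/-- Lift a walk in `H` to a walk in the strong product with fixed first coordinate. -/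
def liftWalk2 (a : α) : ∀ {b d : β}, H.Walk b d → (strongProd G H).Walk (a, b) (a, d)
  | _, _, .nil => .nil
  | _, _, @SimpleGraph.Walk.cons _ _ b w d h p =>
    .cons (show (strongProd G H).Adj (a, b) (a, w) from Or.inl ⟨rfl, h⟩)
      (liftWalk2 a p)

lemma dist_le_one_of_adj {γ : Type*} {K : SimpleGraph γ} {u v : γ} (h : K.Adj u v) :
    K.dist u v ≤ 1 := by
  simpa using K.dist_le (SimpleGraph.Walk.cons h SimpleGraph.Walk.nil)

lemma strong_connected (hG : G.Connected) (hH : H.Connected) :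
    (strongProd G H).Connected := by
  have : Nonempty α := hG.nonempty
  have : Nonempty β := hH.nonempty
  refine ⟨fun x y => ?_⟩
  obtain ⟨p⟩ := hG.preconnected x.1 y.1
  obtain ⟨q⟩ := hH.preconnected x.2 y.2
  exact ⟨((liftWalk1 x.2 p).append (liftWalk2 y.1 q)).copy (by simp) (by simp)⟩

lemma proj1 : ∀ {x y : α × β} (p : (strongProd G H).Walk x y),
    ∃ q : G.Walk x.1 y.1, q.length ≤ p.length := by
  intro x y p
  induction p with
  | nil => exact ⟨.nil, le_rfl⟩
  | @cons x z y h p ih =>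
    obtain ⟨q, hq⟩ := ih
    rcases h with ⟨h1, _⟩ | ⟨_, h1⟩ | ⟨h1, _⟩
    · exact ⟨q.copy h1.symm rfl, by rw [SimpleGraph.Walk.length_copy]; exact hq.trans (Nat.le_succ _)⟩
    · exact ⟨.cons h1 q, Nat.succ_le_succ hq⟩
    · exact ⟨.cons h1 q, Nat.succ_le_succ hq⟩

lemma proj2 : ∀ {x y : α × β} (p : (strongProd G H).Walk x y),
    ∃ q : H.Walk x.2 y.2, q.length ≤ p.length := by
  intro x y p
  induction p with
  | nil => exact ⟨.nil, le_rfl⟩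
  | @cons x z y h p ih =>
    obtain ⟨q, hq⟩ := ih
    rcases h with ⟨_, h1⟩ | ⟨h1, _⟩ | ⟨_, h1⟩
    · exact ⟨.cons h1 q, Nat.succ_le_succ hq⟩
    · exact ⟨q.copy h1.symm rfl, by rw [SimpleGraph.Walk.length_copy]; exact hq.trans (Nat.le_succ _)⟩
    · exact ⟨.cons h1 q, Nat.succ_le_succ hq⟩

lemma dist_strong_le (hG : G.Connected) (hH : H.Connected) :
    ∀ (n : ℕ) (a c : α) (b d : β), G.dist a c ≤ n → H.dist b d ≤ n →
      (strongProd G H).dist (a, b) (c, d) ≤ n := by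
  have hP : (strongProd G H).Connected := strong_connected hG hH
  intro n
  induction n with
  | zero =>
    intro a c b d h1 h2
    obtain rfl := hG.dist_eq_zero_iff.mp (Nat.le_zero.mp h1)
    obtain rfl := hH.dist_eq_zero_iff.mp (Nat.le_zero.mp h2)
    simp [SimpleGraph.dist_self]
  | succ n ih =>
    intro a c b d h1 h2
    by_cases hac : a = c
    · subst hac
      by_cases hbd : b = d
      · subst hbd; simp [SimpleGraph.dist_self]
      · have hpos : 0 < H.dist b d := hH.pos_dist_of_ne hbd
        obtain ⟨p, hp⟩ := hH.exists_walk_length_eq_dist b d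
        cases p with
        | nil => exact absurd rfl hbd
        | @cons _ w _ hadj q =>
          have hq : H.dist w d ≤ n := by
            have := H.dist_le q
            simp at hp; omega
          have step : (strongProd G H).dist (a, b) (a, w) ≤ 1 :=
            dist_le_one_of_adj (Or.inl ⟨rfl, hadj⟩)
          calc (strongProd G H).dist (a, b) (a, d)
              ≤ (strongProd G H).dist (a, b) (a, w) +
                (strongProd G H).dist (a, w) (a, d) := hP.dist_triangle
            _ ≤ 1 + n := Nat.add_le_add step (ih a a w d (by simp [SimpleGraph.dist_self]) hq)
            _ = n + 1 := by omega
    · have hpos : 0 < G.dist a c := hG.pos_dist_of_ne hac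
      obtain ⟨p, hp⟩ := hG.exists_walk_length_eq_dist a c
      cases p with
      | nil => exact absurd rfl hac
      | @cons _ a' _ hadjG qG =>
        have hqG : G.dist a' c ≤ n := by
          have := G.dist_le qG
          simp at hp; omega
        by_cases hbd : b = d
        · subst hbd
          have step : (strongProd G H).dist (a, b) (a', b) ≤ 1 :=
            dist_le_one_of_adj (Or.inr (Or.inl ⟨rfl, hadjG⟩))
          calc (strongProd G H).dist (a, b) (c, b)
              ≤ (strongProd G H).dist (a, b) (a', b) +
                (strongProd G H).dist (a', b) (c, b) := hP.dist_triangle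
            _ ≤ 1 + n := Nat.add_le_add step (ih a' c b b hqG (by simp [SimpleGraph.dist_self]))
            _ = n + 1 := by omega
        · have hposH : 0 < H.dist b d := hH.pos_dist_of_ne hbd
          obtain ⟨p, hp2⟩ := hH.exists_walk_length_eq_dist b d
          cases p with
          | nil => exact absurd rfl hbd
          | @cons _ w _ hadjH qH =>
            have hqH : H.dist w d ≤ n := by
              have := H.dist_le qH
              simp at hp2; omega
            have step : (strongProd G H).dist (a, b) (a', w) ≤ 1 :=
              dist_le_one_of_adj (Or.inr (Or.inr ⟨hadjG, hadjH⟩))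
            calc (strongProd G H).dist (a, b) (c, d)
                ≤ (strongProd G H).dist (a, b) (a', w) +
                  (strongProd G H).dist (a', w) (c, d) := hP.dist_triangle
              _ ≤ 1 + n := Nat.add_le_add step (ih a' c w d hqG hqH)
              _ = n + 1 := by omega

lemma dist_strong (hG : G.Connected) (hH : H.Connected) (a c : α) (b d : β) :
    (strongProd G H).dist (a, b) (c, d) = max (G.dist a c) (H.dist b d) := by
  have hP : (strongProd G H).Connected := strong_connected hG hH
  refine le_antisymm ?_ ?_
  · exact dist_strong_le hG hH _ a c b d (le_max_left _ _) (le_max_right _ _)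
  · obtain ⟨p, hp⟩ := hP.exists_walk_length_eq_dist (a, b) (c, d)
    obtain ⟨q1, h1⟩ := proj1 p
    obtain ⟨q2, h2⟩ := proj2 p
    exact max_le ((G.dist_le q1).trans (hp ▸ h1)) ((H.dist_le q2).trans (hp ▸ h2))

lemma dist_le_diam [Fintype α] (v u : α) : G.dist v u ≤ graphDiam G := by
  have h1 : G.dist v u ≤ eccentricity G v :=
    le_csSup ((Set.finite_range (fun u => G.dist v u)).bddAbove) ⟨u, rfl⟩
  have h2 : eccentricity G v ≤ graphDiam G :=
    le_csSup ((Set.finite_range (fun v => eccentricity G v)).bddAbove) ⟨v, rfl⟩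
  exact h1.trans h2

lemma diam_ge (v u : α) [Fintype α] : G.dist v u ≤ graphDiam G := dist_le_diam v u

lemma twin_adj {u v : α} (h : (trueTwinSetoid G).r u v) (hne : u ≠ v) : G.Adj u v := by
  have hu : u ∈ insert u (G.neighborSet u) := Set.mem_insert _ _
  rw [show ((trueTwinSetoid G).r u v) = (insert u (G.neighborSet u)
      = insert v (G.neighborSet v)) from rfl] at h
  rw [h] at hu
  rcases hu with h' | h'
  · exact absurd h' hne
  · exact (G.adj_symm h')

lemma twin_dist_le (hG : G.Connected) {u v : α} (h : (trueTwinSetoid G).r u v)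
    {s : α} (hsu : s ≠ u) : G.dist v s ≤ G.dist u s := by
  have h' : insert u (G.neighborSet u) = insert v (G.neighborSet v) := h
  have hpos : 0 < G.dist u s := hG.pos_dist_of_ne (Ne.symm hsu)
  obtain ⟨p, hp⟩ := hG.exists_walk_length_eq_dist u s
  cases p with
  | nil => exact absurd rfl hsu
  | @cons _ w _ hadj q =>
    have hw : w ∈ insert v (G.neighborSet v) := by
      rw [← h']; exact Set.mem_insert_of_mem _ hadj
    have hqlen : q.length = G.dist u s - 1 := by simp at hp; omega
    rcases hw with rfl | hw
    · have := G.dist_le q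
      omega
    · calc G.dist v s ≤ G.dist v w + G.dist w s := hG.dist_triangle
        _ ≤ 1 + q.length := Nat.add_le_add (dist_le_one_of_adj hw) (G.dist_le q)
        _ ≤ G.dist u s := by omega

lemma twin_dist (hG : G.Connected) {u v : α} (h : (trueTwinSetoid G).r u v)
    {s : α} (hsu : s ≠ u) (hsv : s ≠ v) : G.dist u s = G.dist v s :=
  le_antisymm (twin_dist_le hG ((trueTwinSetoid G).iseqv.symm h) hsv)
    (twin_dist_le hG h hsu)

lemma no_twins_H (hH : H.Connected) {k : ℕ} (hres : AdjKResolved H k) (hk : 2 ≤ k)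
    {b c : β} (h : (trueTwinSetoid H).r b c) : b = c := by
  by_contra hne
  have hadj : H.Adj b c := twin_adj h hne
  obtain ⟨w, hw | hw⟩ := hres b c hadj
  · obtain ⟨hkw, hint⟩ := hw
    have h1 : H.dist c b = 1 := SimpleGraph.dist_eq_one_iff_adj.mpr hadj.symm
    have hint' : H.dist c b + H.dist b w = H.dist c w := hint
    have hwb : w ≠ b := by
      rintro rfl
      have h0 : H.dist w w = 0 := SimpleGraph.dist_self
      omega
    have hwc : w ≠ c := by
      rintro rfl
      have h0 : H.dist w w = 0 := SimpleGraph.dist_self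
      omega
    have := twin_dist hH ((trueTwinSetoid H).iseqv.symm h) hwc hwb
    omega
  · obtain ⟨hkw, hint⟩ := hw
    have h1 : H.dist b c = 1 := SimpleGraph.dist_eq_one_iff_adj.mpr hadj
    have hint' : H.dist b c + H.dist c w = H.dist b w := hint
    have hwc : w ≠ c := by
      rintro rfl
      have h0 : H.dist w w = 0 := SimpleGraph.dist_self
      omega
    have hwb : w ≠ b := by
      rintro rfl
      have h0 : H.dist w w = 0 := SimpleGraph.dist_self
      omega
    have := twin_dist hH h hwb hwc
    omega

lemma strong_closed (x : α × β) :
    insert x ((strongProd G H).neighborSet x) =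
      (insert x.1 (G.neighborSet x.1)) ×ˢ (insert x.2 (H.neighborSet x.2)) := by
  ext ⟨a, b⟩
  simp only [Set.mem_insert_iff, SimpleGraph.mem_neighborSet, Set.mem_prod, Prod.ext_iff,
    strongProd]
  constructor
  · rintro (⟨rfl, rfl⟩ | ⟨rfl, h⟩ | ⟨rfl, h⟩ | ⟨h1, h2⟩)
    · exact ⟨Or.inl rfl, Or.inl rfl⟩
    · exact ⟨Or.inl rfl, Or.inr h⟩
    · exact ⟨Or.inr h, Or.inl rfl⟩
    · exact ⟨Or.inr h1, Or.inr h2⟩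
  · rintro ⟨rfl | h1, rfl | h2⟩
    · exact Or.inl ⟨rfl, rfl⟩
    · exact Or.inr (Or.inl ⟨rfl, h2⟩)
    · exact Or.inr (Or.inr (Or.inl ⟨rfl, h1⟩))
    · exact Or.inr (Or.inr (Or.inr ⟨h1, h2⟩))

lemma strong_twin_iff {x y : α × β} :
    (trueTwinSetoid (strongProd G H)).r x y ↔
      (trueTwinSetoid G).r x.1 y.1 ∧ (trueTwinSetoid H).r x.2 y.2 := by
  have hx := strong_closed (G := G) (H := H) x
  have hy := strong_closed (G := G) (H := H) y
  constructor
  · intro h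
    have h' : (insert x.1 (G.neighborSet x.1)) ×ˢ (insert x.2 (H.neighborSet x.2)) =
        (insert y.1 (G.neighborSet y.1)) ×ˢ (insert y.2 (H.neighborSet y.2)) := by
      rw [← hx, ← hy]; exact h
    have hx2 : x.2 ∈ insert x.2 (H.neighborSet x.2) := Set.mem_insert _ _
    have hx1 : x.1 ∈ insert x.1 (G.neighborSet x.1) := Set.mem_insert _ _
    have hy2 : y.2 ∈ insert y.2 (H.neighborSet y.2) := Set.mem_insert _ _
    have hy1 : y.1 ∈ insert y.1 (G.neighborSet y.1) := Set.mem_insert _ _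
    have hx1y : x.1 ∈ insert y.1 (G.neighborSet y.1) ∧
        x.2 ∈ insert y.2 (H.neighborSet y.2) := by
      have : (x.1, x.2) ∈ (insert y.1 (G.neighborSet y.1)) ×ˢ
          (insert y.2 (H.neighborSet y.2)) := by rw [← h']; exact ⟨hx1, hx2⟩
      exact this
    have hy1x : y.1 ∈ insert x.1 (G.neighborSet x.1) ∧
        y.2 ∈ insert x.2 (H.neighborSet x.2) := by
      have : (y.1, y.2) ∈ (insert x.1 (G.neighborSet x.1)) ×ˢ
          (insert x.2 (H.neighborSet x.2)) := by rw [h']; exact ⟨hy1, hy2⟩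
      exact this
    constructor
    · ext a
      constructor
      · intro ha
        have : (a, x.2) ∈ (insert y.1 (G.neighborSet y.1)) ×ˢ
            (insert y.2 (H.neighborSet y.2)) := by rw [← h']; exact ⟨ha, hx2⟩
        exact this.1
      · intro ha
        have : (a, y.2) ∈ (insert x.1 (G.neighborSet x.1)) ×ˢ
            (insert x.2 (H.neighborSet x.2)) := by rw [h']; exact ⟨ha, hy2⟩
        exact this.1
    · ext b
      constructor
      · intro hb
        have : (x.1, b) ∈ (insert y.1 (G.neighborSet y.1)) ×ˢ
            (insert y.2 (H.neighborSet y.2)) := by rw [← h']; exact ⟨hx1, hb⟩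
        exact this.2
      · intro hb
        have : (y.1, b) ∈ (insert x.1 (G.neighborSet x.1)) ×ˢ
            (insert x.2 (H.neighborSet x.2)) := by rw [h']; exact ⟨hy1, hb⟩
        exact this.2
  · rintro ⟨h1, h2⟩
    show insert x ((strongProd G H).neighborSet x) = insert y ((strongProd G H).neighborSet y)
    rw [hx, hy]
    have h1' : insert x.1 (G.neighborSet x.1) = insert y.1 (G.neighborSet y.1) := h1
    have h2' : insert x.2 (H.neighborSet x.2) = insert y.2 (H.neighborSet y.2) := h2
    rw [h1', h2']

def twinEquiv (G : SimpleGraph α) (H : SimpleGraph β) :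
    Quotient (trueTwinSetoid (strongProd G H)) ≃
      Quotient (trueTwinSetoid G) × Quotient (trueTwinSetoid H) where
  toFun := Quotient.lift (fun x => (Quotient.mk _ x.1, Quotient.mk _ x.2)) (by
    intro x y hxy
    obtain ⟨h1, h2⟩ := strong_twin_iff.mp hxy
    exact Prod.ext (Quotient.sound h1) (Quotient.sound h2))
  invFun := fun p => Quotient.liftOn₂ p.1 p.2 (fun u b => Quotient.mk _ (u, b)) (by
    intro u b v c h1 h2
    exact Quotient.sound (strong_twin_iff.mpr ⟨h1, h2⟩))
  left_inv := by
    refine Quotient.ind ?_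
    intro x
    rfl
  right_inv := by
    rintro ⟨q1, q2⟩
    refine Quotient.inductionOn₂ q1 q2 ?_
    intro u b
    rfl

lemma card_quot_no_twins (hH : H.Connected) {k : ℕ}
    (hres : AdjKResolved H k) (hk : 2 ≤ k) :
    Nat.card (Quotient (trueTwinSetoid H)) = Nat.card β := by
  refine Nat.card_congr (Equiv.ofBijective (Quotient.mk (trueTwinSetoid H)) ?_).symm
  constructor
  · intro b c h
    exact no_twins_H hH hres hk (Quotient.exact h)
  · exact Quotient.exists_rep

lemma card_quot_strong [Fintype α] [Fintype β] (hH : H.Connected) {k : ℕ}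
    (hres : AdjKResolved H k) (hk : 2 ≤ k) :
    Nat.card (Quotient (trueTwinSetoid (strongProd G H))) =
      Nat.card (Quotient (trueTwinSetoid G)) * Fintype.card β := by
  rw [Nat.card_congr (twinEquiv G H), Nat.card_prod,
    card_quot_no_twins hH hres hk, Nat.card_eq_fintype_card (α := β)]

lemma univ_gen {γ : Type*} [Fintype γ] {K : SimpleGraph γ} (_hK : K.Connected) :
    IsLocalMetricGenerator K ↑(Finset.univ : Finset γ) := by
  intro u v huv
  refine ⟨u, by simp, ?_⟩
  have h0 : K.dist u u = 0 := SimpleGraph.dist_self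
  have h1 : K.dist v u = 1 := SimpleGraph.dist_eq_one_iff_adj.mpr huv.symm
  omega

end StrongAux

/-- if `H` is adjacency `k`-resolved, `D(G) < k` and
`dim_l(G) = n₁ − t₁`, then `dim_l(G ⊠ H) = n₂(n₁ − t₁)`. -/
theorem stmt9 {α β : Type*} [Fintype α] [Fintype β]
    (G : SimpleGraph α) (H : SimpleGraph β)
    (hH : H.Connected) (k : ℕ) (hres : AdjKResolved H k)
    (hG : G.Connected) (hn1 : 2 ≤ Fintype.card α)
    (t1 : ℕ) (ht1 : Nat.card (Quotient (trueTwinSetoid G)) = t1)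
    (hD : graphDiam G < k)
    (hdimG : localMetricDim G = Fintype.card α - t1) :
    localMetricDim (strongProd G H) =
      Fintype.card β * (Fintype.card α - t1) := by
  classical
  have hP : (strongProd G H).Connected := StrongAux.strong_connected hG hH
  -- G has an edge
  obtain ⟨u0, v0, hne0⟩ := Fintype.exists_pair_of_one_lt_card (by omega : 1 < Fintype.card α)
  have hposd : 0 < G.dist u0 v0 := hG.pos_dist_of_ne hne0
  obtain ⟨p0, hp0⟩ := hG.exists_walk_length_eq_dist u0 v0
  obtain ⟨w0, hadj0⟩ : ∃ w, G.Adj u0 w := by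
    cases p0 with
    | nil => exact absurd rfl hne0
    | @cons _ w _ h q => exact ⟨w, h⟩
  -- diameter at least 1, so k ≥ 2
  have hd1 : G.dist u0 w0 = 1 := SimpleGraph.dist_eq_one_iff_adj.mpr hadj0
  have hdiam1 : 1 ≤ graphDiam G := hd1 ▸ StrongAux.dist_le_diam u0 w0
  have hk2 : 2 ≤ k := by omega
  -- extract a minimum local metric generator of G
  have hGne : {n | ∃ S : Finset α, S.card = n ∧ IsLocalMetricGenerator G ↑S}.Nonempty :=
    ⟨_, Finset.univ, rfl, StrongAux.univ_gen hG⟩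
  obtain ⟨S, hScard, hSgen⟩ := Nat.sInf_mem hGne
  have hScard' : S.card = Fintype.card α - t1 := by rw [← hdimG]; exact hScard
  have hSne : S.Nonempty := by
    rcases Finset.eq_empty_or_nonempty S with rfl | h
    · obtain ⟨s, hs, -⟩ := hSgen u0 w0 hadj0
      simp at hs
    · exact h
  obtain ⟨s0, hs0⟩ := hSne
  have ht1lt : t1 < Fintype.card α := by
    have := Finset.card_pos.mpr ⟨s0, hs0⟩
    omega
  -- upper bound: S ×ˢ univ is a local metric generator of the strong product
  have hTgen : IsLocalMetricGenerator (strongProd G H)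
      ↑(S ×ˢ (Finset.univ : Finset β)) := by
    rintro ⟨u, b⟩ ⟨v, c⟩ hadj'
    by_cases hbc : b = c
    · subst hbc
      have hGadj : G.Adj u v := by
        rcases hadj' with ⟨-, h⟩ | ⟨-, h⟩ | ⟨h, -⟩
        · exact absurd h H.irrefl
        · exact h
        · exact h
      obtain ⟨s, hs, hd⟩ := hSgen u v hGadj
      refine ⟨(s, b), by simp [Finset.mem_coe, Finset.mem_product]; exact hs, ?_⟩
      rw [StrongAux.dist_strong hG hH, StrongAux.dist_strong hG hH]
      have h0 : H.dist b b = 0 := SimpleGraph.dist_self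
      simpa [h0] using hd
    · have hHadj : H.Adj b c := by
        rcases hadj' with ⟨-, h⟩ | ⟨h, -⟩ | ⟨-, h⟩
        · exact h
        · exact absurd h hbc
        · exact h
      have hus : G.dist u s0 ≤ graphDiam G := StrongAux.dist_le_diam u s0
      have hvs : G.dist v s0 ≤ graphDiam G := StrongAux.dist_le_diam v s0
      obtain ⟨w, hw | hw⟩ := hres b c hHadj
      · obtain ⟨hkw, hint⟩ := hw
        have hint' : H.dist c b + H.dist b w = H.dist c w := hint
        have h1 : H.dist c b = 1 := SimpleGraph.dist_eq_one_iff_adj.mpr hHadj.symm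
        refine ⟨(s0, w), by simp [Finset.mem_coe, Finset.mem_product]; exact hs0, ?_⟩
        rw [StrongAux.dist_strong hG hH, StrongAux.dist_strong hG hH]
        have e1 : max (G.dist u s0) (H.dist b w) = H.dist b w := max_eq_right (by omega)
        have e2 : max (G.dist v s0) (H.dist c w) = H.dist c w := max_eq_right (by omega)
        rw [e1, e2]
        omega
      · obtain ⟨hkw, hint⟩ := hw
        have hint' : H.dist b c + H.dist c w = H.dist b w := hint
        have h1 : H.dist b c = 1 := SimpleGraph.dist_eq_one_iff_adj.mpr hHadj
        refine ⟨(s0, w), by simp [Finset.mem_coe, Finset.mem_product]; exact hs0, ?_⟩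
        rw [StrongAux.dist_strong hG hH, StrongAux.dist_strong hG hH]
        have e1 : max (G.dist u s0) (H.dist b w) = H.dist b w := max_eq_right (by omega)
        have e2 : max (G.dist v s0) (H.dist c w) = H.dist c w := max_eq_right (by omega)
        rw [e1, e2]
        omega
  -- numerical upper bound
  have hub : localMetricDim (strongProd G H) ≤ (Fintype.card α - t1) * Fintype.card β := by
    have hcard : (S ×ˢ (Finset.univ : Finset β)).card =
        (Fintype.card α - t1) * Fintype.card β := by
      rw [Finset.card_product, hScard', Finset.card_univ]
    exact hcard ▸ Nat.sInf_le ⟨S ×ˢ Finset.univ, rfl, hTgen⟩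
  -- lower bound
  have hPne : {n | ∃ T : Finset (α × β), T.card = n ∧
      IsLocalMetricGenerator (strongProd G H) ↑T}.Nonempty :=
    ⟨_, Finset.univ, rfl, StrongAux.univ_gen hP⟩
  obtain ⟨T, hTcard, hTgen'⟩ := Nat.sInf_mem hPne
  have hTcard' : T.card = localMetricDim (strongProd G H) := hTcard
  have hinj : Function.Injective (fun x : {x : α × β // x ∉ T} =>
      Quotient.mk (trueTwinSetoid (strongProd G H)) x.1) := by
    rintro ⟨x, hx⟩ ⟨y, hy⟩ hxy
    simp only at hxy
    by_contra hne
    have hnexy : x ≠ y := fun h => hne (Subtype.ext h)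
    have hr := Quotient.exact hxy
    have hadjxy := StrongAux.twin_adj hr hnexy
    obtain ⟨s, hsT, hds⟩ := hTgen' x y hadjxy
    have hsT' : s ∈ T := Finset.mem_coe.mp hsT
    have hsx : s ≠ x := fun h => hx (h ▸ hsT')
    have hsy : s ≠ y := fun h => hy (h ▸ hsT')
    exact hds (StrongAux.twin_dist hP hr hsx hsy)
  have hcard1 : Fintype.card {x : α × β // x ∉ T} ≤
      Nat.card (Quotient (trueTwinSetoid (strongProd G H))) := by
    have := Nat.card_le_card_of_injective _ hinj
    simpa [Nat.card_eq_fintype_card] using this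
  have hcompl : Fintype.card {x : α × β // x ∉ T} =
      Fintype.card (α × β) - T.card := by
    rw [Fintype.card_subtype_compl, Fintype.card_coe]
  have hquot : Nat.card (Quotient (trueTwinSetoid (strongProd G H))) =
      t1 * Fintype.card β := by
    rw [StrongAux.card_quot_strong hH hres hk2, ht1]
  -- arithmetic
  have hAB : Fintype.card (α × β) = Fintype.card α * Fintype.card β :=
    Fintype.card_prod α β
  have hsub : (Fintype.card α - t1) * Fintype.card β =
      Fintype.card α * Fintype.card β - t1 * Fintype.card β := Nat.sub_mul _ _ _
  have hle : t1 * Fintype.card β ≤ Fintype.card α * Fintype.card β :=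
    Nat.mul_le_mul_right _ (le_of_lt ht1lt)
  have hcomm : Fintype.card β * (Fintype.card α - t1) =
      (Fintype.card α - t1) * Fintype.card β := mul_comm _ _
  rw [hcomm]
  omega
end

section
/- Let G be a connected graph with at least two vertices, let t ≥ 1 be an integer, and let P_t be the path with vertices u₁, …, u_t (u_i adjacent to u_{i+1}). Let B be a local metric basis of P_t ⊠ G with |B| = b, and let i₁ ≤ i₂ ≤ ⋯ ≤ i_b be the indices (listed with multiplicity) of the first components of the elements of B. Then for every l ∈ {1, …, b−2} one has i_{l+2} ≤ 2D(G) + i_l, and moreover i₃ ≤ 2D(G) + 1, where D(G) is the diameter of G. -/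
open SimpleGraph

lemma ndist_def (a b : ℕ) : Nat.dist a b = (a - b) + (b - a) := rfl

section basic
variable {α : Type*} {G : SimpleGraph α}

lemma aux_dist_le_diam [Fintype α] (u v : α) : G.dist u v ≤ graphDiam G := by
  have h1 : G.dist u v ≤ eccentricity G u :=
    le_csSup (Set.finite_range (G.dist u)).bddAbove ⟨v, rfl⟩
  exact h1.trans (le_csSup (Set.finite_range (eccentricity G)).bddAbove ⟨u, rfl⟩)

lemma aux_one_le_diam [Fintype α] (hG : G.Connected) (hn : 2 ≤ Fintype.card α) :
    1 ≤ graphDiam G := by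
  obtain ⟨a, b, hab⟩ := Fintype.one_lt_card_iff.mp (show 1 < Fintype.card α by omega)
  exact lt_of_lt_of_le (hG.pos_dist_of_ne hab) (aux_dist_le_diam a b)

lemma aux_dist_adj (hG : G.Connected) {u v : α} (h : G.Adj u v) : G.dist u v = 1 := by
  refine le_antisymm ?_ (hG.pos_dist_of_ne h.ne)
  simpa using SimpleGraph.dist_le (SimpleGraph.Walk.cons h SimpleGraph.Walk.nil)

lemma aux_exists_step (hG : G.Connected) {x y : α} {n : ℕ} (h : G.dist x y = n + 1) :
    ∃ x', G.Adj x x' ∧ G.dist x' y = n := by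
  obtain ⟨p, hp⟩ := (hG x y).exists_walk_length_eq_dist
  cases p with
  | nil => rw [SimpleGraph.dist_self] at h; omega
  | @cons _ x' _ hadj q =>
    refine ⟨x', hadj, le_antisymm ?_ ?_⟩
    · have := SimpleGraph.dist_le q
      rw [SimpleGraph.Walk.length_cons] at hp
      omega
    · have h1 := hG.dist_triangle (u := x) (v := x') (w := y)
      have h2 := aux_dist_adj hG hadj
      omega

lemma aux_exists_nbr [Fintype α] (hG : G.Connected) (hn : 2 ≤ Fintype.card α) (x : α) :
    ∃ y, G.Adj x y := by
  obtain ⟨z, hz⟩ := Fintype.exists_ne_of_one_lt_card (show 1 < Fintype.card α by omega) x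
  have hd : 1 ≤ G.dist x z := hG.pos_dist_of_ne (Ne.symm hz)
  obtain ⟨y, hy, -⟩ := aux_exists_step hG (show G.dist x z = (G.dist x z - 1) + 1 by omega)
  exact ⟨y, hy⟩

lemma aux_geo (hG : G.Connected) :
    ∀ (a : ℕ) (s1 s2 : α) (δ : ℕ), G.dist s1 s2 = δ → a < δ →
      ∃ u u', G.Adj u u' ∧ G.dist u s1 = a ∧ G.dist u s2 = δ - a ∧
        G.dist u' s1 = a + 1 ∧ G.dist u' s2 = δ - a - 1 := by
  intro a
  induction a with
  | zero =>
    intro s1 s2 δ hδ h0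
    obtain ⟨u', hadj, hu'⟩ := aux_exists_step hG (show G.dist s1 s2 = (δ - 1) + 1 by omega)
    refine ⟨s1, u', hadj, SimpleGraph.dist_self, by simpa using hδ,
      aux_dist_adj hG hadj.symm, by rw [Nat.sub_zero]; exact hu'⟩
  | succ a ih =>
    intro s1 s2 δ hδ h
    obtain ⟨s1', hadj, hs1'⟩ := aux_exists_step hG (show G.dist s1 s2 = (δ - 1) + 1 by omega)
    obtain ⟨u, u', huu, e1, e2, e3, e4⟩ := ih s1' s2 (δ - 1) hs1' (by omega)
    have hc1 : G.dist u s1 = a + 1 := by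
      have t1 : G.dist u s1 ≤ G.dist u s1' + G.dist s1' s1 := hG.dist_triangle
      have t2 : G.dist s1 s2 ≤ G.dist s1 u + G.dist u s2 := hG.dist_triangle
      have t3 : G.dist s1 u = G.dist u s1 := SimpleGraph.dist_comm
      have t4 : G.dist s1' s1 = 1 := aux_dist_adj hG hadj.symm
      omega
    have hc2 : G.dist u' s1 = a + 2 := by
      have t1 : G.dist u' s1 ≤ G.dist u' s1' + G.dist s1' s1 := hG.dist_triangle
      have t2 : G.dist s1 s2 ≤ G.dist s1 u' + G.dist u' s2 := hG.dist_triangle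
      have t3 : G.dist s1 u' = G.dist u' s1 := SimpleGraph.dist_comm
      have t4 : G.dist s1' s1 = 1 := aux_dist_adj hG hadj.symm
      have t5 : G.dist u' s1' = G.dist s1' u' := SimpleGraph.dist_comm
      omega
    exact ⟨u, u', huu, hc1, by rw [e2]; omega, hc2, by rw [e4]; omega⟩

end basic

section product
variable {α : Type*} {G : SimpleGraph α} {t : ℕ}

lemma sp_step_bound (hG : G.Connected) {x y : Fin t × α}
    (h : (strongProd (SimpleGraph.pathGraph t) G).Adj x y) :
    Nat.dist (x.1 : ℕ) (y.1 : ℕ) ≤ 1 ∧ G.dist x.2 y.2 ≤ 1 := by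
  have hpath : ∀ {u v : Fin t}, (SimpleGraph.pathGraph t).Adj u v →
      Nat.dist (u : ℕ) (v : ℕ) ≤ 1 := by
    intro u v huv
    rcases SimpleGraph.pathGraph_adj.mp huv with h' | h' <;> simp only [ndist_def] <;> omega
  have hGd : ∀ {u v : α}, G.Adj u v → G.dist u v ≤ 1 := by
    intro u v huv
    simpa using SimpleGraph.dist_le (SimpleGraph.Walk.cons huv SimpleGraph.Walk.nil)
  rcases h with ⟨h1, h2⟩ | ⟨h1, h2⟩ | ⟨h1, h2⟩
  · exact ⟨by rw [h1]; simp [Nat.dist_self], hGd h2⟩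
  · exact ⟨hpath h2, by rw [h1]; simp [SimpleGraph.dist_self]⟩
  · exact ⟨hpath h1, hGd h2⟩

lemma sp_walk_bound (hG : G.Connected) {x y : Fin t × α}
    (p : (strongProd (SimpleGraph.pathGraph t) G).Walk x y) :
    Nat.dist (x.1 : ℕ) (y.1 : ℕ) ≤ p.length ∧ G.dist x.2 y.2 ≤ p.length := by
  induction p with
  | nil => simp [Nat.dist_self, SimpleGraph.dist_self]
  | @cons a b c h q ih =>
    obtain ⟨s1, s2⟩ := sp_step_bound hG h
    obtain ⟨r1, r2⟩ := ih
    rw [SimpleGraph.Walk.length_cons]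
    constructor
    · have := Nat.dist.triangle_inequality (a.1 : ℕ) (b.1 : ℕ) (c.1 : ℕ)
      omega
    · have := hG.dist_triangle (u := a.2) (v := b.2) (w := c.2)
      omega

lemma sp_exists_walk (hG : G.Connected) :
    ∀ (n : ℕ) (x y : Fin t × α), Nat.dist (x.1 : ℕ) (y.1 : ℕ) ≤ n → G.dist x.2 y.2 ≤ n →
      ∃ p : (strongProd (SimpleGraph.pathGraph t) G).Walk x y, p.length ≤ n := by
  intro n
  induction n with
  | zero =>
    intro x y h1 h2
    have e1 : x.1 = y.1 := Fin.ext (by simp only [ndist_def] at h1; omega)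
    have e2 : x.2 = y.2 := (hG.dist_eq_zero_iff).mp (Nat.le_zero.mp h2)
    obtain rfl : x = y := Prod.ext e1 e2
    exact ⟨SimpleGraph.Walk.nil, by simp⟩
  | succ n ih =>
    intro x y h1 h2
    by_cases hxy : x = y
    · subst hxy; exact ⟨SimpleGraph.Walk.nil, by simp⟩
    · have hstep1 : ∃ a : Fin t, ((SimpleGraph.pathGraph t).Adj x.1 a ∨ x.1 = a) ∧
          Nat.dist (a : ℕ) (y.1 : ℕ) ≤ n ∧ (x.1 ≠ y.1 → (SimpleGraph.pathGraph t).Adj x.1 a) := by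
        by_cases he : x.1 = y.1
        · exact ⟨x.1, Or.inr rfl, by rw [he]; simp [Nat.dist_self], fun hc => absurd he hc⟩
        · have hne : (x.1 : ℕ) ≠ (y.1 : ℕ) := fun hc => he (Fin.ext hc)
          rcases Nat.lt_or_ge (x.1 : ℕ) (y.1 : ℕ) with hlt | hge
          · refine ⟨⟨(x.1 : ℕ) + 1, lt_of_le_of_lt hlt y.1.isLt⟩,
              Or.inl (SimpleGraph.pathGraph_adj.mpr (Or.inl rfl)), ?_,
              fun _ => SimpleGraph.pathGraph_adj.mpr (Or.inl rfl)⟩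
            simp only [ndist_def] at h1 ⊢; omega
          · refine ⟨⟨(x.1 : ℕ) - 1, by have := x.1.isLt; omega⟩,
              Or.inl (SimpleGraph.pathGraph_adj.mpr (Or.inr (by simp; omega))), ?_,
              fun _ => SimpleGraph.pathGraph_adj.mpr (Or.inr (by simp; omega))⟩
            simp only [ndist_def] at h1 ⊢; omega
      have hstep2 : ∃ a : α, (G.Adj x.2 a ∨ x.2 = a) ∧
          G.dist a y.2 ≤ n ∧ (x.2 ≠ y.2 → G.Adj x.2 a) := by
        by_cases he : x.2 = y.2
        · refine ⟨x.2, Or.inr rfl, ?_, fun hc => absurd he hc⟩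
          rw [he, SimpleGraph.dist_self]; omega
        · have hd : 1 ≤ G.dist x.2 y.2 := hG.pos_dist_of_ne he
          obtain ⟨a, ha, hda⟩ := aux_exists_step hG
            (show G.dist x.2 y.2 = (G.dist x.2 y.2 - 1) + 1 by omega)
          exact ⟨a, Or.inl ha, by omega, fun _ => ha⟩
      obtain ⟨a1, ha1, hd1, hs1⟩ := hstep1
      obtain ⟨a2, ha2, hd2, hs2⟩ := hstep2
      have hadj : (strongProd (SimpleGraph.pathGraph t) G).Adj x (a1, a2) := by
        rcases ha1 with h1a | h1a <;> rcases ha2 with h2a | h2a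
        · exact Or.inr (Or.inr ⟨h1a, h2a⟩)
        · exact Or.inr (Or.inl ⟨h2a, h1a⟩)
        · exact Or.inl ⟨h1a, h2a⟩
        · exfalso
          rcases (show x.1 ≠ y.1 ∨ x.2 ≠ y.2 by
            by_contra hc; push_neg at hc; exact hxy (Prod.ext hc.1 hc.2)) with hne | hne
          · exact SimpleGraph.irrefl _ (h1a ▸ hs1 hne)
          · exact G.irrefl (h2a ▸ hs2 hne)
      obtain ⟨q, hq⟩ := ih (a1, a2) y hd1 hd2
      exact ⟨SimpleGraph.Walk.cons hadj q, by rw [SimpleGraph.Walk.length_cons]; omega⟩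

lemma sp_dist (hG : G.Connected) (x y : Fin t × α) :
    (strongProd (SimpleGraph.pathGraph t) G).dist x y =
      max (Nat.dist (x.1 : ℕ) (y.1 : ℕ)) (G.dist x.2 y.2) := by
  obtain ⟨p, hp⟩ := sp_exists_walk hG (max (Nat.dist (x.1 : ℕ) (y.1 : ℕ)) (G.dist x.2 y.2)) x y
    (le_max_left _ _) (le_max_right _ _)
  apply le_antisymm
  · exact (SimpleGraph.dist_le p).trans hp
  · have hr : (strongProd (SimpleGraph.pathGraph t) G).Reachable x y := ⟨p⟩
    obtain ⟨q, hq⟩ := hr.exists_walk_length_eq_dist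
    have hb := sp_walk_bound hG q
    rw [hq] at hb
    exact max_le hb.1 hb.2

end product

section core
variable {α : Type*} [Fintype α] {G : SimpleGraph α} {t : ℕ}

lemma core_lemma (hG : G.Connected) (hn : 2 ≤ Fintype.card α)
    {B : Finset (Fin t × α)}
    (hBgen : IsLocalMetricGenerator (strongProd (SimpleGraph.pathGraph t) G) ↑B)
    (w1 w2 : Fin t × α) (c : ℕ) (hc1 : 1 ≤ c) (hct : c ≤ t)
    (hfar : ∀ p ∈ B, graphDiam G ≤ Nat.dist (c - 1) (p.1 : ℕ) ∨ p = w1 ∨ p = w2)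
    (hm1 : c ≠ (w1.1 : ℕ) + 1) (hm2 : c ≠ (w2.1 : ℕ) + 1)
    (hsum : G.dist w1.2 w2.2 + 1 ≤ Nat.dist c ((w1.1 : ℕ) + 1) + Nat.dist c ((w2.1 : ℕ) + 1)) :
    False := by
  have hd1 : 1 ≤ Nat.dist c ((w1.1 : ℕ) + 1) := by simp only [ndist_def]; omega
  have hd2 : 1 ≤ Nat.dist c ((w2.1 : ℕ) + 1) := by simp only [ndist_def]; omega
  obtain ⟨u, u', hadj, hu1, hu1', hu2, hu2'⟩ : ∃ u u', G.Adj u u' ∧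
      G.dist u w1.2 ≤ Nat.dist c ((w1.1 : ℕ) + 1) ∧
      G.dist u' w1.2 ≤ Nat.dist c ((w1.1 : ℕ) + 1) ∧
      G.dist u w2.2 ≤ Nat.dist c ((w2.1 : ℕ) + 1) ∧
      G.dist u' w2.2 ≤ Nat.dist c ((w2.1 : ℕ) + 1) := by
    rcases Nat.eq_zero_or_pos (G.dist w1.2 w2.2) with h0 | hpos
    · have heq : w1.2 = w2.2 := hG.dist_eq_zero_iff.mp h0
      obtain ⟨v, hv⟩ := aux_exists_nbr hG hn w1.2
      have hv1 : G.dist v w1.2 = 1 := aux_dist_adj hG hv.symm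
      refine ⟨w1.2, v, hv, ?_, ?_, ?_, ?_⟩
      · rw [SimpleGraph.dist_self]; omega
      · rw [hv1]; exact hd1
      · rw [← heq, SimpleGraph.dist_self]; omega
      · rw [← heq, hv1]; exact hd2
    · obtain ⟨u, u', hadj, e1, e2, e3, e4⟩ := aux_geo hG
        (G.dist w1.2 w2.2 - Nat.dist c ((w2.1 : ℕ) + 1)) w1.2 w2.2
        (G.dist w1.2 w2.2) rfl (by omega)
      exact ⟨u, u', hadj, by rw [e1]; omega, by rw [e3]; omega,
        by rw [e2]; omega, by rw [e4]; omega⟩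
  have hclt : c - 1 < t := by omega
  obtain ⟨s, hsB, hne⟩ := hBgen (⟨c - 1, hclt⟩, u) (⟨c - 1, hclt⟩, u')
    (Or.inl ⟨rfl, hadj⟩)
  have hsB' : s ∈ B := hsB
  rw [sp_dist hG, sp_dist hG] at hne
  have hne' : max (Nat.dist (c - 1) (s.1 : ℕ)) (G.dist u s.2) ≠
      max (Nat.dist (c - 1) (s.1 : ℕ)) (G.dist u' s.2) := hne
  rcases hfar s hsB' with hf | rfl | rfl
  · exact hne' (by
      rw [max_eq_left ((aux_dist_le_diam u s.2).trans hf),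
        max_eq_left ((aux_dist_le_diam u' s.2).trans hf)])
  · have he : Nat.dist (c - 1) (s.1 : ℕ) = Nat.dist c ((s.1 : ℕ) + 1) := by
      simp only [ndist_def]; omega
    exact hne' (by rw [he, max_eq_left hu1, max_eq_left hu1'])
  · have he : Nat.dist (c - 1) (s.1 : ℕ) = Nat.dist c ((s.1 : ℕ) + 1) := by
      simp only [ndist_def]; omega
    exact hne' (by rw [he, max_eq_left hu2, max_eq_left hu2'])

end core

section reps

lemma rep_one {β : Type*} (s : Finset β) (h : s.card ≤ 1) (d : β) :
    ∃ a, ∀ x ∈ s, x = a := by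
  have H := Finset.card_le_one.mp h
  by_cases hs : s.Nonempty
  · obtain ⟨a, ha⟩ := hs
    exact ⟨a, fun x hx => H x hx a ha⟩
  · exact ⟨d, fun x hx => absurd ⟨x, hx⟩ hs⟩

lemma rep_two {β : Type*} [DecidableEq β] (s : Finset β) (h : s.card ≤ 2) (d : β) :
    ∃ a b, ∀ x ∈ s, x = a ∨ x = b := by
  by_cases hs : s.Nonempty
  · obtain ⟨a, ha⟩ := hs
    have h1 : (s.erase a).card ≤ 1 := by
      have := Finset.card_erase_of_mem ha; omega
    obtain ⟨w, hw⟩ := rep_one _ h1 d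
    refine ⟨a, w, fun x hx => ?_⟩
    by_cases hxa : x = a
    · exact Or.inl hxa
    · exact Or.inr (hw x (Finset.mem_erase.mpr ⟨hxa, hx⟩))
  · exact ⟨d, d, fun x hx => absurd ⟨x, hx⟩ hs⟩

lemma count_transfer {γ : Type*} {b : ℕ} (B : Finset γ) (f : γ → ℕ) (i : ℕ → ℕ)
    (henum : Multiset.map f B.val = Multiset.map i (Multiset.range b))
    (Q : ℕ → Prop) [DecidablePred Q] :
    (B.filter (fun p => Q (f p))).card = ((Finset.range b).filter (fun j => Q (i j))).card := by
  have hC := congrArg (Multiset.countP Q) henum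
  rw [Multiset.countP_map, Multiset.countP_map] at hC
  rw [Finset.card_def, Finset.filter_val, Finset.card_def, Finset.filter_val, Finset.range_val]
  exact hC

end reps

/-- for a local metric basis `B` of `P_t ⊠ G` whose first
components, listed (1-based) in non-decreasing order with multiplicity, are
`i₁ ≤ i₂ ≤ ⋯ ≤ i_b` (here `i (l-1)` is `i_l`), one has
`i_{l+2} ≤ 2D(G) + i_l` for every `l ∈ {1,…,b−2}`, and `i₃ ≤ 2D(G) + 1`. -/
theorem stmt12 {α : Type*} [Fintype α] (G : SimpleGraph α) (hG : G.Connected)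
    (hn : 2 ≤ Fintype.card α) (t : ℕ) (ht : 1 ≤ t)
    (B : Finset (Fin t × α))
    (hBgen : IsLocalMetricGenerator (strongProd (SimpleGraph.pathGraph t) G) ↑B)
    (hBmin : B.card = localMetricDim (strongProd (SimpleGraph.pathGraph t) G))
    (b : ℕ) (hb : B.card = b)
    (i : ℕ → ℕ)
    (hmono : ∀ j k : ℕ, j ≤ k → k < b → i j ≤ i k)
    (henum : Multiset.map (fun p => (p.1 : ℕ) + 1) B.val =
      Multiset.map i (Multiset.range b)) :
    (∀ l : ℕ, l + 2 < b → i (l + 2) ≤ 2 * graphDiam G + i l) ∧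
      (3 ≤ b → i 2 ≤ 2 * graphDiam G + 1) := by

  classical
  have hD1 : 1 ≤ graphDiam G := aux_one_le_diam hG hn
  have hα : Nonempty α := Fintype.card_pos_iff.mp (by omega)
  have dummy : Fin t × α := ⟨⟨0, by omega⟩, Classical.arbitrary α⟩
  have hval : ∀ j, j < b → ∃ p ∈ B, (p.1 : ℕ) + 1 = i j := by
    intro j hj
    have hmem : i j ∈ Multiset.map i (Multiset.range b) :=
      Multiset.mem_map.mpr ⟨j, Multiset.mem_range.mpr hj, rfl⟩
    rw [← henum] at hmem
    obtain ⟨p, hp, he⟩ := Multiset.mem_map.mp hmem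
    exact ⟨p, hp, he⟩
  have hub : ∀ j, j < b → 1 ≤ i j ∧ i j ≤ t := by
    intro j hj
    obtain ⟨p, hp, he⟩ := hval j hj
    have := p.1.isLt
    omega
  constructor
  · intro l hl
    by_contra hcon
    push_neg at hcon
    have hil : 1 ≤ i l := (hub l (by omega)).1
    have hiu : i (l + 2) ≤ t := (hub (l + 2) hl).2
    have hcard : (B.filter (fun p => i l < (p.1 : ℕ) + 1 ∧ (p.1 : ℕ) + 1 < i (l + 2))).card
        ≤ 1 := by
      have hC := congrArg (Multiset.countP (fun x => i l < x ∧ x < i (l + 2))) henum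
      rw [Multiset.countP_map, Multiset.countP_map] at hC
      rw [Finset.card_def, Finset.filter_val]
      have hR : (Multiset.card
          (Multiset.filter (fun j => i l < i j ∧ i j < i (l + 2)) (Multiset.range b))) ≤ 1 := by
        rw [← Finset.range_val, ← Finset.filter_val, ← Finset.card_def]
        refine le_trans (Finset.card_le_card ?_)
          (le_of_eq (Finset.card_singleton (l + 1)))
        intro j hj
        simp only [Finset.mem_filter, Finset.mem_range] at hj
        obtain ⟨hjb, hjl, hju⟩ := hj
        simp only [Finset.mem_singleton]
        by_contra hne
        rcases Nat.lt_or_ge j (l + 1) with hlt | hge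
        · exact absurd (hmono j l (by omega) (by omega)) (by omega)
        · exact absurd (hmono (l + 2) j (by omega) hjb) (by omega)
      calc Multiset.card
            (Multiset.filter (fun p => i l < (p.1 : ℕ) + 1 ∧ (p.1 : ℕ) + 1 < i (l + 2)) B.val)
          = Multiset.card
            (Multiset.filter (fun j => i l < i j ∧ i j < i (l + 2)) (Multiset.range b)) := hC
        _ ≤ 1 := hR
    obtain ⟨w, hw⟩ := rep_one _ hcard dummy
    have hkey : ∀ c, i l + graphDiam G ≤ c → c ≤ i l + graphDiam G + 1 → c = (w.1 : ℕ) + 1 := by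
      intro c hcl hcu
      by_contra hcm
      refine core_lemma hG hn hBgen w w c (by omega) (by omega) ?_ hcm hcm ?_
      · intro p hp
        by_cases hpF : p ∈ B.filter
            (fun p => i l < (p.1 : ℕ) + 1 ∧ (p.1 : ℕ) + 1 < i (l + 2))
        · exact Or.inr (Or.inl (hw p hpF))
        · left
          have hcol : ¬(i l < (p.1 : ℕ) + 1 ∧ (p.1 : ℕ) + 1 < i (l + 2)) :=
            fun hq => hpF (Finset.mem_filter.mpr ⟨hp, hq⟩)
          have := p.1.isLt
          simp only [ndist_def]
          omega
      · rw [SimpleGraph.dist_self]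
        simp only [ndist_def]
        omega
    have e1 := hkey (i l + graphDiam G) le_rfl (by omega)
    have e2 := hkey (i l + graphDiam G + 1) (by omega) le_rfl
    omega
  · intro hb3
    by_contra hcon
    push_neg at hcon
    have hiu : i 2 ≤ t := (hub 2 (by omega)).2
    have hcard : (B.filter (fun p => (p.1 : ℕ) + 1 < i 2)).card ≤ 2 := by
      have hC := congrArg (Multiset.countP (fun x => x < i 2)) henum
      rw [Multiset.countP_map, Multiset.countP_map] at hC
      rw [Finset.card_def, Finset.filter_val]
      have hR : (Multiset.card
          (Multiset.filter (fun j => i j < i 2) (Multiset.range b))) ≤ 2 := by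
        rw [← Finset.range_val, ← Finset.filter_val, ← Finset.card_def]
        refine le_trans (Finset.card_le_card (?_ : _ ⊆ ({0, 1} : Finset ℕ))) (by decide)
        intro j hj
        simp only [Finset.mem_filter, Finset.mem_range] at hj
        obtain ⟨hjb, hju⟩ := hj
        simp only [Finset.mem_insert, Finset.mem_singleton]
        by_contra hne
        push_neg at hne
        exact absurd (hmono 2 j (by omega) hjb) (by omega)
      calc Multiset.card (Multiset.filter (fun p => (p.1 : ℕ) + 1 < i 2) B.val)
          = Multiset.card (Multiset.filter (fun j => i j < i 2) (Multiset.range b)) := hC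
        _ ≤ 2 := hR
    obtain ⟨w1, w2, hw⟩ := rep_two _ hcard dummy
    have hδD : G.dist w1.2 w2.2 ≤ graphDiam G := aux_dist_le_diam _ _
    have H : ∀ c, 1 ≤ c → c ≤ i 2 - graphDiam G →
        c = (w1.1 : ℕ) + 1 ∨ c = (w2.1 : ℕ) + 1 ∨
          Nat.dist c ((w1.1 : ℕ) + 1) + Nat.dist c ((w2.1 : ℕ) + 1) ≤ G.dist w1.2 w2.2 := by
      intro c hc1 hc2
      by_contra hcc
      push_neg at hcc
      obtain ⟨h1, h2, h3⟩ := hcc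
      refine core_lemma hG hn hBgen w1 w2 c hc1 (by omega) ?_ h1 h2 (by omega)
      intro p hp
      by_cases hpF : p ∈ B.filter (fun p => (p.1 : ℕ) + 1 < i 2)
      · exact Or.inr (hw p hpF)
      · left
        have hcol : ¬((p.1 : ℕ) + 1 < i 2) :=
          fun hq => hpF (Finset.mem_filter.mpr ⟨hp, hq⟩)
        have := p.1.isLt
        simp only [ndist_def]
        omega
    by_cases h12 : Nat.dist ((w1.1 : ℕ) + 1) ((w2.1 : ℕ) + 1) ≤ G.dist w1.2 w2.2
    · have K : ∀ c, 1 ≤ c → c ≤ i 2 - graphDiam G →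
          Nat.dist c ((w1.1 : ℕ) + 1) + Nat.dist c ((w2.1 : ℕ) + 1) ≤ G.dist w1.2 w2.2 := by
        intro c hc1 hc2
        rcases H c hc1 hc2 with he | he | he
        · subst he; simp only [ndist_def] at h12 ⊢; omega
        · subst he; simp only [ndist_def] at h12 ⊢; omega
        · exact he
      have K1 := K 1 le_rfl (by omega)
      have K2 := K (i 2 - graphDiam G) (by omega) le_rfl
      simp only [ndist_def] at K1 K2
      omega
    · have H1 := H 1 le_rfl (by omega)
      have H2 := H 2 (by omega) (by omega)
      have H3 := H 3 (by omega) (by omega)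
      simp only [ndist_def] at H1 H2 H3 h12
      rcases H1 with e | e | e <;> rcases H2 with f | f | f <;> rcases H3 with g | g | g <;> omega
end
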